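/- Let u_1,...,u_n ∈ C^d satisfy sum_{i=1}^n u_i u_i* = (n/d)·I with n ≤ 2d−1. Then for any signs ε_1,...,ε_n ∈ {−1,1}, the operator norm of sum_{i=1}^n ε_i u_i u_i* equals n/d. -/

import Mathlib

open Matrix BigOperators

noncomputable def outer {d : ℕ} (u : EuclideanSpace ℂ (Fin d)) :
    Matrix (Fin d) (Fin d) ℂ :=
  Matrix.vecMulVec u (star u)

noncomputable def specNorm {d : ℕ} (A : Matrix (Fin d) (Fin d) ℂ) : ℝ :=
  ‖Matrix.toEuclideanCLM (𝕜 := ℂ) A‖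

section Aux

variable {d n : ℕ}

local notation "E" => EuclideanSpace ℂ (Fin d)

lemma toCLM_outer (u x : EuclideanSpace ℂ (Fin d)) :
    Matrix.toEuclideanCLM (𝕜 := ℂ) (outer u) x = (inner ℂ u x : ℂ) • u := by
  have h : Matrix.toEuclideanCLM (𝕜 := ℂ) (outer u) x
      = (WithLp.equiv 2 _).symm ((outer u) *ᵥ (WithLp.equiv 2 _ x)) := rfl
  rw [h]
  ext j
  simp [outer, Matrix.vecMulVec, Matrix.mulVec, dotProduct, PiLp.inner_apply,
    Finset.mul_sum, mul_comm, mul_assoc, mul_left_comm]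

lemma frame_apply (u : Fin n → E)
    (hframe : ∑ i, outer (u i)
      = ((n : ℂ) / (d : ℂ)) • (1 : Matrix (Fin d) (Fin d) ℂ))
    (x : E) :
    ∑ i, (inner ℂ (u i) x : ℂ) • u i = ((n : ℂ) / (d : ℂ)) • x := by
  have h := congrArg (Matrix.toEuclideanCLM (𝕜 := ℂ)) hframe
  rw [map_sum, _root_.map_smul, _root_.map_one] at h
  have h2 := congrArg (fun T : EuclideanSpace ℂ (Fin d) →L[ℂ] EuclideanSpace ℂ (Fin d) => T x) h
  simpa [toCLM_outer] using h2

lemma sum_norm_inner_sq (u : Fin n → E)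
    (hframe : ∑ i, outer (u i)
      = ((n : ℂ) / (d : ℂ)) • (1 : Matrix (Fin d) (Fin d) ℂ))
    (x : E) :
    ∑ i, ‖(inner ℂ (u i) x : ℂ)‖ ^ 2 = ((n : ℝ) / d) * ‖x‖ ^ 2 := by
  have h := congrArg (fun y => (inner ℂ x y : ℂ)) (frame_apply u hframe x)
  simp only [inner_sum, inner_smul_right] at h
  have h2 : ∀ i, (inner ℂ (u i) x : ℂ) * (inner ℂ x (u i) : ℂ)
      = ((‖(inner ℂ (u i) x : ℂ)‖ ^ 2 : ℝ) : ℂ) := by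
    intro i
    rw [← inner_conj_symm x (u i), RCLike.mul_conj]
    norm_cast
  simp only [h2, inner_smul_right, inner_self_eq_norm_sq_to_K] at h
  apply Complex.ofReal_injective
  push_cast at h ⊢
  exact h

lemma inner_sum_S (u : Fin n → E) (S : Finset (Fin n)) (x : E) :
    (inner ℂ x (∑ i ∈ S, (inner ℂ (u i) x : ℂ) • u i) : ℂ)
      = ((∑ i ∈ S, ‖(inner ℂ (u i) x : ℂ)‖ ^ 2 : ℝ) : ℂ) := by
  rw [inner_sum]
  push_cast
  refine Finset.sum_congr rfl fun i _ => ?_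
  rw [inner_smul_right, ← inner_conj_symm x (u i), RCLike.mul_conj]
  norm_cast

lemma key_norm (hd : 0 < d) (u : Fin n → E)
    (hparseval : ∀ x : E, ∑ i, ‖(inner ℂ (u i) x : ℂ)‖ ^ 2 = ((n : ℝ) / d) * ‖x‖ ^ 2)
    (S : Finset (Fin n)) (hS : S.card < d)
    (T : E →L[ℂ] E)
    (hT : ∀ x : E, T x = ((n : ℂ) / (d : ℂ)) • x
      - (2 : ℂ) • ∑ i ∈ S, (inner ℂ (u i) x : ℂ) • u i) :
    ‖T‖ = (n : ℝ) / d := by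
  classical
  set c : ℝ := (n : ℝ) / d with hc
  have hc0 : 0 ≤ c := by positivity
  have hcC : ((n : ℂ) / (d : ℂ)) = ((c : ℝ) : ℂ) := by rw [hc]; push_cast; ring
  -- upper bound
  have hub : ‖T‖ ≤ c := by
    refine ContinuousLinearMap.opNorm_le_bound T hc0 fun x => ?_
    set q : E := ∑ i ∈ S, (inner ℂ (u i) x : ℂ) • u i with hq
    set gx : ℝ := ∑ i ∈ S, ‖(inner ℂ (u i) x : ℂ)‖ ^ 2 with hgx
    set gq : ℝ := ∑ i ∈ S, ‖(inner ℂ (u i) q : ℂ)‖ ^ 2 with hgq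
    have hgx0 : 0 ≤ gx := Finset.sum_nonneg fun i _ => by positivity
    have hgq0 : 0 ≤ gq := Finset.sum_nonneg fun i _ => by positivity
    have hxq : (inner ℂ x q : ℂ) = ((gx : ℝ) : ℂ) := inner_sum_S u S x
    have hgq_le : gq ≤ c * ‖q‖ ^ 2 := by
      rw [← hparseval q]
      exact Finset.sum_le_sum_of_subset_of_nonneg (Finset.subset_univ S)
        (fun i _ _ => by positivity)
    have h1 : ‖q‖ ^ 2 ≤ ∑ i ∈ S, ‖(inner ℂ (u i) x : ℂ)‖ * ‖(inner ℂ (u i) q : ℂ)‖ := by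
      have e1 : (inner ℂ q q : ℂ) = ∑ i ∈ S, (inner ℂ (u i) x : ℂ) * (inner ℂ q (u i) : ℂ) := by
        conv_lhs => rw [hq, inner_sum]
        refine Finset.sum_congr rfl fun i _ => ?_
        rw [inner_smul_right]
      calc ‖q‖ ^ 2 = ‖(inner ℂ q q : ℂ)‖ := by
            rw [inner_self_eq_norm_sq_to_K]
            simp [Complex.norm_real]
        _ ≤ ∑ i ∈ S, ‖(inner ℂ (u i) x : ℂ) * (inner ℂ q (u i) : ℂ)‖ := by
            rw [e1]; exact norm_sum_le _ _
        _ = ∑ i ∈ S, ‖(inner ℂ (u i) x : ℂ)‖ * ‖(inner ℂ (u i) q : ℂ)‖ := by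
            refine Finset.sum_congr rfl fun i _ => ?_
            rw [norm_mul, norm_inner_symm q (u i)]
    have h2 : (∑ i ∈ S, ‖(inner ℂ (u i) x : ℂ)‖ * ‖(inner ℂ (u i) q : ℂ)‖) ^ 2 ≤ gx * gq :=
      Finset.sum_mul_sq_le_sq_mul_sq S _ _
    have hq2 : ‖q‖ ^ 2 ≤ c * gx := by
      rcases eq_or_lt_of_le (norm_nonneg q) with h0 | h0
      · rw [← h0]; simpa using mul_nonneg hc0 hgx0
      · have ht : 0 < ‖q‖ ^ 2 := by positivity
        have hs0 : 0 ≤ ∑ i ∈ S, ‖(inner ℂ (u i) x : ℂ)‖ * ‖(inner ℂ (u i) q : ℂ)‖ :=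
          le_trans (le_of_lt ht) h1
        have h4 : (‖q‖ ^ 2) * (‖q‖ ^ 2) ≤ (c * gx) * (‖q‖ ^ 2) := by nlinarith
        exact le_of_mul_le_mul_right h4 ht
    have hTx : ‖T x‖ ^ 2 ≤ (c * ‖x‖) ^ 2 := by
      rw [hT x, hcC]
      rw [norm_sub_sq (𝕜 := ℂ)]
      have e2 : RCLike.re (inner ℂ (((c : ℝ) : ℂ) • x) ((2 : ℂ) • q) : ℂ) = c * (2 * gx) := by
        rw [inner_smul_left, inner_smul_right, hxq]
        simp [Complex.conj_ofReal]
      have e3 : ‖((c : ℝ) : ℂ) • x‖ = c * ‖x‖ := by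
        rw [norm_smul, Complex.norm_real, Real.norm_eq_abs, abs_of_nonneg hc0]
      have e4 : ‖(2 : ℂ) • q‖ ^ 2 = 4 * ‖q‖ ^ 2 := by
        rw [norm_smul, Complex.norm_ofNat]; ring
      rw [e2, e3, e4]
      nlinarith
    have := Real.sqrt_le_sqrt hTx
    rwa [Real.sqrt_sq (norm_nonneg _), Real.sqrt_sq (by positivity)] at this
  -- lower bound
  have hlb : c ≤ ‖T‖ := by
    obtain ⟨v, hv0, hvS⟩ : ∃ v : E, v ≠ 0 ∧ ∀ i ∈ S, (inner ℂ (u i) v : ℂ) = 0 := by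
      set L : E →ₗ[ℂ] (S → ℂ) :=
        LinearMap.pi (fun i : S => ((innerSL ℂ (u i.1) : E →L[ℂ] ℂ) : E →ₗ[ℂ] ℂ)) with hL
      have hninj : ¬ Function.Injective L := by
        intro hinj
        have := LinearMap.finrank_le_finrank_of_injective hinj
        rw [finrank_euclideanSpace, Fintype.card_fin] at this
        rw [Module.finrank_pi, Fintype.card_coe] at this
        omega
      rw [← LinearMap.ker_eq_bot] at hninj
      obtain ⟨v, hv, hv0⟩ := Submodule.exists_mem_ne_zero_of_ne_bot hninj
      refine ⟨v, hv0, fun i hi => ?_⟩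
      have := congrFun (LinearMap.mem_ker.mp hv) ⟨i, hi⟩
      simpa [hL, LinearMap.pi_apply] using this
    have hTv : T v = ((c : ℝ) : ℂ) • v := by
      rw [hT v, hcC, Finset.sum_eq_zero (fun i hi => by rw [hvS i hi, zero_smul]),
        smul_zero, sub_zero]
    have h5 : c * ‖v‖ ≤ ‖T‖ * ‖v‖ := by
      have := T.le_opNorm v
      rwa [hTv, norm_smul, Complex.norm_real, Real.norm_eq_abs, abs_of_nonneg hc0] at this
    exact le_of_mul_le_mul_right h5 (norm_pos_iff.mpr hv0)
  linarith

lemma sign_split (ε : Fin n → ℝ) (hε : ∀ i, ε i = 1 ∨ ε i = -1)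
    (w : Fin n → E) :
    ∑ i, ((ε i : ℂ)) • w i
      = ∑ i, w i - (2 : ℂ) • ∑ i ∈ Finset.univ.filter (fun i => ε i = -1), w i := by
  classical
  set S := Finset.univ.filter (fun i => ε i = -1) with hS
  have e1 : ∑ i, ((ε i : ℂ)) • w i
      = (- ∑ i ∈ S, w i) + ∑ i ∈ Sᶜ, w i := by
    rw [← Finset.sum_neg_distrib]
    rw [← Finset.sum_add_sum_compl S]
    congr 1
    · refine Finset.sum_congr rfl fun i hi => ?_
      rw [hS] at hi
      simp only [Finset.mem_filter] at hi
      rw [hi.2]; push_cast; rw [neg_one_smul]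
    · refine Finset.sum_congr rfl fun i hi => ?_
      rw [hS] at hi
      simp only [Finset.compl_filter, Finset.mem_filter] at hi
      rcases hε i with h | h
      · rw [h]; norm_num
      · exact absurd h hi.2
  have e2 : ∑ i, w i = ∑ i ∈ S, w i + ∑ i ∈ Sᶜ, w i :=
    (Finset.sum_add_sum_compl S w).symm
  rw [e1, e2, two_smul]
  abel

lemma main_case (hd : 0 < d) (u : Fin n → E)
    (hframe : ∑ i, outer (u i)
      = ((n : ℂ) / (d : ℂ)) • (1 : Matrix (Fin d) (Fin d) ℂ))
    (ε : Fin n → ℝ) (hε : ∀ i, ε i = 1 ∨ ε i = -1)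
    (hcard : (Finset.univ.filter (fun i => ε i = -1)).card < d) :
    specNorm (∑ i, ((ε i : ℂ)) • outer (u i)) = (n : ℝ) / d := by
  classical
  set S := Finset.univ.filter (fun i => ε i = -1) with hS
  have hT : ∀ x : E, Matrix.toEuclideanCLM (𝕜 := ℂ) (∑ i, ((ε i : ℂ)) • outer (u i)) x
      = ((n : ℂ) / (d : ℂ)) • x - (2 : ℂ) • ∑ i ∈ S, (inner ℂ (u i) x : ℂ) • u i := by
    intro x
    have h1 : Matrix.toEuclideanCLM (𝕜 := ℂ) (∑ i, ((ε i : ℂ)) • outer (u i)) x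
        = ∑ i, ((ε i : ℂ)) • ((inner ℂ (u i) x : ℂ) • u i) := by
      rw [map_sum]
      simp only [_root_.map_smul, ContinuousLinearMap.coe_sum', Finset.sum_apply,
        ContinuousLinearMap.coe_smul', Pi.smul_apply, toCLM_outer]
    rw [h1, sign_split ε hε (fun i => (inner ℂ (u i) x : ℂ) • u i), frame_apply u hframe x, ← hS]
  exact key_norm hd u (sum_norm_inner_sq u hframe) S hcard _ hT

end Aux

/-- if `∑ u_i u_i* = (n/d)·I` and `n ≤ 2d−1`, then for any signs
`ε_i ∈ {−1,1}` the spectral norm of `∑ ε_i u_i u_i*` equals `n/d`. -/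
theorem norm_signed_sum_eq {d n : ℕ} (hd : 0 < d) (hn : n ≤ 2 * d - 1)
    (u : Fin n → EuclideanSpace ℂ (Fin d))
    (hframe : ∑ i, outer (u i)
      = ((n : ℂ) / (d : ℂ)) • (1 : Matrix (Fin d) (Fin d) ℂ))
    (ε : Fin n → ℝ) (hε : ∀ i, ε i = 1 ∨ ε i = -1) :
    specNorm (∑ i, ((ε i : ℂ)) • outer (u i)) = (n : ℝ) / d := by
  classical
  by_cases hcard : (Finset.univ.filter (fun i => ε i = -1)).card < d
  · exact main_case hd u hframe ε hε hcard
  · -- flip the signs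
    set ε' : Fin n → ℝ := fun i => -(ε i) with hε'def
    have hε' : ∀ i, ε' i = 1 ∨ ε' i = -1 := by
      intro i
      rcases hε i with h | h
      · right; simp [hε'def, h]
      · left; simp [hε'def, h]
    have hfilter : (Finset.univ.filter (fun i => ε' i = -1))
        = (Finset.univ.filter (fun i => ε i = -1))ᶜ := by
      ext i
      simp only [Finset.mem_filter, Finset.compl_filter, Finset.mem_univ, true_and, hε'def]
      constructor
      · intro h
        intro habs
        rw [habs] at h
        norm_num at h
      · intro h
        rcases hε i with h1 | h1
        · rw [h1]
        · exact absurd h1 h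
    have hcard' : (Finset.univ.filter (fun i => ε' i = -1)).card < d := by
      rw [hfilter, Finset.card_compl, Fintype.card_fin]
      push_neg at hcard
      omega
    have hres := main_case hd u hframe ε' hε' hcard'
    have hneg : ∑ i, ((ε' i : ℂ)) • outer (u i) = - ∑ i, ((ε i : ℂ)) • outer (u i) := by
      rw [← Finset.sum_neg_distrib]
      refine Finset.sum_congr rfl fun i _ => ?_
      simp [hε'def, neg_smul]
    rw [hneg] at hres
    rw [show specNorm (- ∑ i, ((ε i : ℂ)) • outer (u i))
        = specNorm (∑ i, ((ε i : ℂ)) • outer (u i)) by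
      unfold specNorm
      rw [map_neg, norm_neg]] at hres
    exact hres
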